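/- Under the basic estimate ∥u∥² ≤ C·Q(u,u) for u ∈ Dom(∂) ∩ Dom(∂*) ∩ 𝓗^⟂, for every α ∈ 𝓗^⟂ there exists a unique φ ∈ 𝓗^⟂ ∩ Dom(∂) ∩ Dom(∂*) such that Q(φ, ψ) = (α, ψ) for all ψ ∈ Dom(∂) ∩ Dom(∂*); moreover the Green operator G : α ↦ φ is bounded with ∥Gα∥ ≤ C∥α∥. -/

import Mathlib

open scoped InnerProductSpace

set_option maxHeartbeats 1000000
set_option synthInstance.maxHeartbeats 400000

private lemma sqrt_trick {a b C : ℝ} (ha : 0 ≤ a) (hb : 0 ≤ b) (hC : 0 ≤ C)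
    (h : a ^ 2 ≤ C * b ^ 2) : a ≤ Real.sqrt C * b := by
  have := Real.sqrt_le_sqrt h
  rwa [Real.sqrt_sq ha, Real.sqrt_mul hC, Real.sqrt_sq hb] at this

/-- Existence, uniqueness and boundedness of the Green operator (Corollary 5.5):
under the basic estimate `∥u∥² ≤ C·Q(u,u)` on `Dom ∂ ∩ Dom ∂* ∩ 𝓗^⟂`, for
every `α ⟂ 𝓗` there is a unique `φ ∈ 𝓗^⟂ ∩ Dom ∂ ∩ Dom ∂*` with
`Q(φ, ψ) = (α, ψ)` for all `ψ ∈ Dom ∂ ∩ Dom ∂*`, and moreover `∥φ∥ ≤ C·∥α∥`. -/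
theorem green_operator_exists
    {H H₂ H₃ : Type*} [NormedAddCommGroup H] [InnerProductSpace ℂ H] [CompleteSpace H]
    [NormedAddCommGroup H₂] [InnerProductSpace ℂ H₂] [CompleteSpace H₂]
    [NormedAddCommGroup H₃] [InnerProductSpace ℂ H₃] [CompleteSpace H₃]
    (T : H →ₗ.[ℂ] H₂) (S : H →ₗ.[ℂ] H₃)
    (hTclosed : T.IsClosed) (hSclosed : S.IsClosed)
    (hdense : Dense {x : H | x ∈ T.domain ∧ x ∈ S.domain})
    (K : Submodule ℂ H)
    (hK : ∀ u : H, u ∈ K ↔ ∃ (h1 : u ∈ T.domain) (h2 : u ∈ S.domain),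
      T ⟨u, h1⟩ = 0 ∧ S ⟨u, h2⟩ = 0)
    (C : ℝ) (hC : 0 < C)
    (hest : ∀ (u : H) (h1 : u ∈ T.domain) (h2 : u ∈ S.domain),
      (∀ w ∈ K, ⟪u, w⟫_ℂ = 0) →
      ‖u‖ ^ 2 ≤ C * (‖T ⟨u, h1⟩‖ ^ 2 + ‖S ⟨u, h2⟩‖ ^ 2))
    (α : H) (hα : ∀ w ∈ K, ⟪α, w⟫_ℂ = 0) :
    ∃! φ : H, ∃ (h1 : φ ∈ T.domain) (h2 : φ ∈ S.domain),
      (∀ w ∈ K, ⟪φ, w⟫_ℂ = 0) ∧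
      (∀ (ψ : H) (p1 : ψ ∈ T.domain) (p2 : ψ ∈ S.domain),
        ⟪T ⟨φ, h1⟩, T ⟨ψ, p1⟩⟫_ℂ + ⟪S ⟨φ, h2⟩, S ⟨ψ, p2⟩⟫_ℂ = ⟪α, ψ⟫_ℂ) ∧
      ‖φ‖ ≤ C * ‖α‖ := by
  classical
  -- the space V = Dom T ⊓ Dom S ⊓ Kᗮ
  set V : Submodule ℂ H := (T.domain ⊓ S.domain) ⊓ Kᗮ with hVdef
  have hV1 : V ≤ T.domain := le_trans inf_le_left inf_le_left
  have hV2 : V ≤ S.domain := le_trans inf_le_left inf_le_right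
  have hVmem : ∀ u : H, u ∈ V ↔ (u ∈ T.domain ∧ u ∈ S.domain) ∧ u ∈ Kᗮ := by
    intro u; simp [hVdef, Submodule.mem_inf]
  have hVperp : ∀ u : H, u ∈ V → ∀ w ∈ K, ⟪u, w⟫_ℂ = 0 := by
    intro u hu w hw
    exact ((Submodule.mem_orthogonal' K u).1 ((hVmem u).1 hu).2) w hw
  -- the operator Φ : V → H₂ ×₂ H₃
  set Φ : V →ₗ[ℂ] WithLp 2 (H₂ × H₃) :=
    (WithLp.linearEquiv 2 ℂ (H₂ × H₃)).symm.toLinearMap ∘ₗ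
      ((T.toFun ∘ₗ Submodule.inclusion hV1).prod (S.toFun ∘ₗ Submodule.inclusion hV2))
    with hΦdef
  have hΦ1 : ∀ (u : V) (h1 : (u : H) ∈ T.domain), (Φ u).fst = T ⟨u, h1⟩ := fun u h1 => rfl
  have hΦ2 : ∀ (u : V) (h2 : (u : H) ∈ S.domain), (Φ u).snd = S ⟨u, h2⟩ := fun u h2 => rfl
  -- the basic estimate, in terms of Φ
  have hest' : ∀ u : V, ‖(u : H)‖ ^ 2 ≤ C * ‖Φ u‖ ^ 2 := by
    intro u
    have h1 := hV1 u.2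
    have h2 := hV2 u.2
    have := hest u h1 h2 (hVperp u u.2)
    rw [WithLp.prod_norm_sq_eq_of_L2, hΦ1 u h1, hΦ2 u h2]
    exact this
  -- Φ is injective
  have hinj : Function.Injective Φ := by
    rw [injective_iff_map_eq_zero]
    intro u hu
    have := hest' u
    rw [hu, norm_zero] at this
    have : ‖(u : H)‖ ^ 2 ≤ 0 := by simpa using this
    have : (u : H) = 0 := by
      have := norm_eq_zero.1 (le_antisymm (by nlinarith [norm_nonneg (u : H)]) (norm_nonneg _))
      exact this
    exact Subtype.ext this
  -- the range of Φ is closed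
  have hRclosed : IsClosed ((LinearMap.range Φ : Submodule ℂ (WithLp 2 (H₂ × H₃))) :
      Set (WithLp 2 (H₂ × H₃))) := by
    apply IsSeqClosed.isClosed
    intro x z hx hz
    choose u hu using hx
    -- u is Cauchy in H
    have hcz : CauchySeq x := hz.cauchySeq
    have key : ∀ m n, dist ((u m : H)) ((u n : H)) ≤ Real.sqrt C * dist (x m) (x n) := by
      intro m n
      rw [dist_eq_norm, dist_eq_norm, ← hu m, ← hu n]
      have h := hest' (u m - u n)
      rw [map_sub] at h
      exact sqrt_trick (norm_nonneg _) (norm_nonneg _) hC.le (by exact_mod_cast h)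
    have hcu : CauchySeq (fun n => (u n : H)) := by
      rw [Metric.cauchySeq_iff] at hcz ⊢
      intro ε hε
      obtain ⟨N, hN⟩ := hcz (ε / (Real.sqrt C + 1))
        (div_pos hε (by positivity))
      refine ⟨N, fun m hm n hn => ?_⟩
      calc dist ((u m : H)) ((u n : H)) ≤ Real.sqrt C * dist (x m) (x n) := key m n
        _ < Real.sqrt C * (ε / (Real.sqrt C + 1)) :=
            mul_lt_mul_of_pos_left (hN m hm n hn) (Real.sqrt_pos.2 hC)
        _ ≤ ε := by
            rw [mul_div_assoc']
            rw [div_le_iff₀ (by positivity)]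
            nlinarith [Real.sqrt_nonneg C]
    obtain ⟨l, hl⟩ := cauchySeq_tendsto_of_complete hcu
    -- component convergence
    have h1 : Filter.Tendsto (fun n => (x n).fst) Filter.atTop (nhds z.fst) :=
      ((WithLp.prodContinuousLinearEquiv 2 ℂ H₂ H₃).continuous.fst.tendsto z).comp hz
    have h2 : Filter.Tendsto (fun n => (x n).snd) Filter.atTop (nhds z.snd) :=
      ((WithLp.prodContinuousLinearEquiv 2 ℂ H₂ H₃).continuous.snd.tendsto z).comp hz
    -- closedness of the graphs
    have hTl : (l, z.fst) ∈ T.graph := by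
      apply hTclosed.mem_of_tendsto (hl.prodMk_nhds h1)
      filter_upwards with n
      have := T.mem_graph ⟨u n, hV1 (u n).2⟩
      rwa [← hΦ1 (u n) (hV1 (u n).2), hu n] at this
    have hSl : (l, z.snd) ∈ S.graph := by
      apply hSclosed.mem_of_tendsto (hl.prodMk_nhds h2)
      filter_upwards with n
      have := S.mem_graph ⟨u n, hV2 (u n).2⟩
      rwa [← hΦ2 (u n) (hV2 (u n).2), hu n] at this
    obtain ⟨y1, hy1, hy1'⟩ := T.mem_graph_iff.1 hTl
    obtain ⟨y2, hy2, hy2'⟩ := S.mem_graph_iff.1 hSl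
    have hlperp : l ∈ Kᗮ := by
      have : IsClosed ((Kᗮ : Submodule ℂ H) : Set H) := Submodule.isClosed_orthogonal K
      apply this.mem_of_tendsto hl
      filter_upwards with n
      exact ((hVmem _).1 (u n).2).2
    have hy1c : (y1 : H) = l := hy1
    have hy2c : (y2 : H) = l := hy2
    have hlT : l ∈ T.domain := by rw [← hy1c]; exact y1.2
    have hlS : l ∈ S.domain := by rw [← hy2c]; exact y2.2
    have hlV : l ∈ V := (hVmem l).2 ⟨⟨hlT, hlS⟩, hlperp⟩
    refine ⟨⟨l, hlV⟩, ?_⟩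
    have e1 : (Φ ⟨l, hlV⟩).fst = z.fst := by
      rw [hΦ1 ⟨l, hlV⟩ hlT]
      have hy : y1 = ⟨l, hlT⟩ := Subtype.ext hy1c
      rw [← hy]; exact hy1'
    have e2 : (Φ ⟨l, hlV⟩).snd = z.snd := by
      rw [hΦ2 ⟨l, hlV⟩ hlS]
      have hy : y2 = ⟨l, hlS⟩ := Subtype.ext hy2c
      rw [← hy]; exact hy2'
    exact WithLp.ofLp_injective 2 (Prod.ext e1 e2)
  haveI : CompleteSpace (LinearMap.range Φ) := hRclosed.completeSpace_coe
  set e := LinearEquiv.ofInjective Φ hinj with hedef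
  have hΦsymm : ∀ z : LinearMap.range Φ, Φ (e.symm z) = (z : WithLp 2 (H₂ × H₃)) := by
    intro z
    have h := e.apply_symm_apply z
    have h2 : ((e (e.symm z)) : WithLp 2 (H₂ × H₃)) = (z : WithLp 2 (H₂ × H₃)) := by rw [h]
    rwa [hedef, LinearEquiv.ofInjective_apply] at h2
  set ℓ₀ : V →ₗ[ℂ] ℂ := (innerSL ℂ α).toLinearMap ∘ₗ V.subtype with hℓ₀def
  have hℓ₀ : ∀ v : V, ℓ₀ v = ⟪α, (v : H)⟫_ℂ := fun v => rfl
  set ℓ : LinearMap.range Φ →ₗ[ℂ] ℂ := ℓ₀ ∘ₗ (e.symm : LinearMap.range Φ →ₗ[ℂ] V) with hℓdef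
  have hℓbound : ∀ z : LinearMap.range Φ, ‖ℓ z‖ ≤ (Real.sqrt C * ‖α‖) * ‖z‖ := by
    intro z
    have h1 : ‖ℓ z‖ ≤ ‖α‖ * ‖((e.symm z : V) : H)‖ := norm_inner_le_norm α _
    have h2 : ‖((e.symm z : V) : H)‖ ≤ Real.sqrt C * ‖z‖ := by
      have h3 := hest' (e.symm z)
      rw [hΦsymm z] at h3
      exact sqrt_trick (norm_nonneg _) (norm_nonneg _) hC.le h3
    calc ‖ℓ z‖ ≤ ‖α‖ * ‖((e.symm z : V) : H)‖ := h1
      _ ≤ ‖α‖ * (Real.sqrt C * ‖z‖) := mul_le_mul_of_nonneg_left h2 (norm_nonneg _)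
      _ = (Real.sqrt C * ‖α‖) * ‖z‖ := by ring
  set ℓc := LinearMap.mkContinuous ℓ _ hℓbound with hℓcdef
  set y := (InnerProductSpace.toDual ℂ (LinearMap.range Φ)).symm ℓc with hydef
  set φV : V := e.symm y with hφVdef
  have hΦφ : Φ φV = (y : WithLp 2 (H₂ × H₃)) := hΦsymm y
  have hyz : ∀ z : LinearMap.range Φ,
      ⟪(y : WithLp 2 (H₂ × H₃)), (z : WithLp 2 (H₂ × H₃))⟫_ℂ = ℓ z := by
    intro z
    have := InnerProductSpace.toDual_symm_apply (𝕜 := ℂ) (E := LinearMap.range Φ)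
      (y := ℓc) (x := z)
    exact this
  -- the weak equation on V
  have hmainV : ∀ v : V,
      ⟪(Φ φV).fst, (Φ v).fst⟫_ℂ + ⟪(Φ φV).snd, (Φ v).snd⟫_ℂ = ⟪α, (v : H)⟫_ℂ := by
    intro v
    have hvz : Φ v ∈ LinearMap.range Φ := LinearMap.mem_range_self Φ v
    have hev : e v = ⟨Φ v, hvz⟩ := Subtype.ext (by rw [hedef, LinearEquiv.ofInjective_apply])
    calc ⟪(Φ φV).fst, (Φ v).fst⟫_ℂ + ⟪(Φ φV).snd, (Φ v).snd⟫_ℂ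
        = ⟪Φ φV, Φ v⟫_ℂ := (WithLp.prod_inner_apply _ _).symm
      _ = ⟪(y : WithLp 2 (H₂ × H₃)), ((⟨Φ v, hvz⟩ : LinearMap.range Φ) : WithLp 2 (H₂ × H₃))⟫_ℂ := by
          rw [hΦφ]
      _ = ℓ ⟨Φ v, hvz⟩ := hyz ⟨Φ v, hvz⟩
      _ = ℓ₀ (e.symm ⟨Φ v, hvz⟩) := rfl
      _ = ℓ₀ v := by rw [← hev, e.symm_apply_apply]
      _ = ⟪α, (v : H)⟫_ℂ := rfl
  -- K is closed, so orthogonal projections onto K exist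
  have hKset : (K : Set H) = ((fun u : H => (u, (0 : H₂))) ⁻¹' (T.graph : Set (H × H₂))) ∩
      ((fun u : H => (u, (0 : H₃))) ⁻¹' (S.graph : Set (H × H₃))) := by
    ext u
    simp only [Set.mem_inter_iff, Set.mem_preimage, SetLike.mem_coe, hK u,
      LinearPMap.mem_graph_iff]
    constructor
    · rintro ⟨h1, h2, hT0, hS0⟩
      exact ⟨⟨⟨u, h1⟩, rfl, hT0⟩, ⟨⟨u, h2⟩, rfl, hS0⟩⟩
    · rintro ⟨⟨y1, hy1, hy1'⟩, ⟨y2, hy2, hy2'⟩⟩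
      have hy1c : (y1 : H) = u := hy1
      have hy2c : (y2 : H) = u := hy2
      have h1 : u ∈ T.domain := by rw [← hy1c]; exact y1.2
      have h2 : u ∈ S.domain := by rw [← hy2c]; exact y2.2
      refine ⟨h1, h2, ?_, ?_⟩
      · have hy : y1 = ⟨u, h1⟩ := Subtype.ext hy1c
        rw [← hy]; exact hy1'
      · have hy : y2 = ⟨u, h2⟩ := Subtype.ext hy2c
        rw [← hy]; exact hy2'
  have hKclosed : IsClosed (K : Set H) := by
    rw [hKset]
    exact IsClosed.inter
      (IsClosed.preimage (continuous_id.prodMk continuous_const) hTclosed)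
      (IsClosed.preimage (continuous_id.prodMk continuous_const) hSclosed)
  haveI : CompleteSpace K := hKclosed.completeSpace_coe
  have hφ1 : ((φV : H)) ∈ T.domain := hV1 φV.2
  have hφ2 : ((φV : H)) ∈ S.domain := hV2 φV.2
  have hφperp : ∀ w ∈ K, ⟪(φV : H), w⟫_ℂ = 0 := hVperp _ φV.2
  -- main identity for all ψ in the joint domain
  have main : ∀ (ψ : H) (p1 : ψ ∈ T.domain) (p2 : ψ ∈ S.domain),
      ⟪T ⟨(φV : H), hφ1⟩, T ⟨ψ, p1⟩⟫_ℂ + ⟪S ⟨(φV : H), hφ2⟩, S ⟨ψ, p2⟩⟫_ℂ = ⟪α, ψ⟫_ℂ := by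
    intro ψ p1 p2
    set w : H := (K.orthogonalProjectionOnto ψ : H) with hwdef
    have hwK : w ∈ K := (K.orthogonalProjectionOnto ψ).2
    obtain ⟨hw1, hw2, hwT, hwS⟩ := (hK w).1 hwK
    have hperp : ψ - w ∈ Kᗮ := Submodule.sub_starProjection_mem_orthogonal (K := K) ψ
    have hvV : ψ - w ∈ V := (hVmem _).2 ⟨⟨sub_mem p1 hw1, sub_mem p2 hw2⟩, hperp⟩
    have hres := hmainV ⟨ψ - w, hvV⟩
    have hT : (Φ (⟨ψ - w, hvV⟩ : V)).fst = T ⟨ψ, p1⟩ := by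
      rw [hΦ1 _ (sub_mem p1 hw1)]
      have hsub : (⟨ψ - w, sub_mem p1 hw1⟩ : T.domain) = ⟨ψ, p1⟩ - ⟨w, hw1⟩ :=
        Subtype.ext (by simp)
      rw [hsub, T.map_sub, hwT, sub_zero]
    have hS : (Φ (⟨ψ - w, hvV⟩ : V)).snd = S ⟨ψ, p2⟩ := by
      rw [hΦ2 _ (sub_mem p2 hw2)]
      have hsub : (⟨ψ - w, sub_mem p2 hw2⟩ : S.domain) = ⟨ψ, p2⟩ - ⟨w, hw2⟩ :=
        Subtype.ext (by simp)
      rw [hsub, S.map_sub, hwS, sub_zero]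
    rw [hT, hS, hΦ1 φV hφ1, hΦ2 φV hφ2] at hres
    have : ((⟨ψ - w, hvV⟩ : V) : H) = ψ - w := rfl
    rw [this, inner_sub_right, hα w hwK, sub_zero] at hres
    exact hres
  -- norm bound
  have hQ := main ((φV : H)) hφ1 hφ2
  have hre : ‖T ⟨(φV : H), hφ1⟩‖ ^ 2 + ‖S ⟨(φV : H), hφ2⟩‖ ^ 2 = (⟪α, (φV : H)⟫_ℂ).re := by
    have h := congrArg Complex.re hQ
    simp only [inner_self_eq_norm_sq_to_K] at h
    simp only [Complex.add_re, ← Complex.ofReal_pow, Complex.ofReal_re, Complex.zero_re] at h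
    norm_cast at h
  have hreb : (⟪α, (φV : H)⟫_ℂ).re ≤ ‖α‖ * ‖(φV : H)‖ :=
    le_trans (Complex.re_le_norm _) (by exact norm_inner_le_norm α _)
  have hsq : ‖(φV : H)‖ ^ 2 ≤ C * (‖α‖ * ‖(φV : H)‖) := by
    calc ‖(φV : H)‖ ^ 2
        ≤ C * (‖T ⟨(φV : H), hφ1⟩‖ ^ 2 + ‖S ⟨(φV : H), hφ2⟩‖ ^ 2) := hest _ hφ1 hφ2 hφperp
      _ = C * (⟪α, (φV : H)⟫_ℂ).re := by rw [hre]
      _ ≤ C * (‖α‖ * ‖(φV : H)‖) := mul_le_mul_of_nonneg_left hreb hC.le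
  have hnorm : ‖(φV : H)‖ ≤ C * ‖α‖ := by
    rcases eq_or_lt_of_le (norm_nonneg ((φV : H))) with h0 | h0
    · rw [← h0]; positivity
    · have hsq' : ‖(φV : H)‖ * ‖(φV : H)‖ ≤ (C * ‖α‖) * ‖(φV : H)‖ := by nlinarith
      exact le_of_mul_le_mul_right hsq' h0
  -- conclusion
  refine ⟨(φV : H), ⟨hφ1, hφ2, hφperp, main, hnorm⟩, ?_⟩
  rintro ψ ⟨p1, p2, hperp, hmain, -⟩
  have hd1 : ψ - (φV : H) ∈ T.domain := sub_mem p1 hφ1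
  have hd2 : ψ - (φV : H) ∈ S.domain := sub_mem p2 hφ2
  have e1 := hmain (ψ - (φV : H)) hd1 hd2
  have e2 := main (ψ - (φV : H)) hd1 hd2
  have hTu : T ⟨ψ - (φV : H), hd1⟩ = T ⟨ψ, p1⟩ - T ⟨(φV : H), hφ1⟩ := by
    have hsub : (⟨ψ - (φV : H), hd1⟩ : T.domain) = ⟨ψ, p1⟩ - ⟨(φV : H), hφ1⟩ :=
      Subtype.ext (by simp)
    rw [hsub, T.map_sub]
  have hSu : S ⟨ψ - (φV : H), hd2⟩ = S ⟨ψ, p2⟩ - S ⟨(φV : H), hφ2⟩ := by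
    have hsub : (⟨ψ - (φV : H), hd2⟩ : S.domain) = ⟨ψ, p2⟩ - ⟨(φV : H), hφ2⟩ :=
      Subtype.ext (by simp)
    rw [hsub, S.map_sub]
  have hzero : ⟪T ⟨ψ - (φV : H), hd1⟩, T ⟨ψ - (φV : H), hd1⟩⟫_ℂ +
      ⟪S ⟨ψ - (φV : H), hd2⟩, S ⟨ψ - (φV : H), hd2⟩⟫_ℂ = 0 := by
    nth_rewrite 1 [hTu]
    nth_rewrite 1 [hSu]
    rw [inner_sub_left, inner_sub_left]
    linear_combination e1 - e2
  have hn : ‖T ⟨ψ - (φV : H), hd1⟩‖ ^ 2 + ‖S ⟨ψ - (φV : H), hd2⟩‖ ^ 2 = 0 := by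
    have h := congrArg Complex.re hzero
    simp only [inner_self_eq_norm_sq_to_K] at h
    simp only [Complex.add_re, ← Complex.ofReal_pow, Complex.ofReal_re, Complex.zero_re] at h
    norm_cast at h
  have huperp : ∀ w ∈ K, ⟪ψ - (φV : H), w⟫_ℂ = 0 := fun w hw => by
    rw [inner_sub_left, hperp w hw, hφperp w hw, sub_zero]
  have hfin := hest (ψ - (φV : H)) hd1 hd2 huperp
  rw [hn, mul_zero] at hfin
  have hle : ‖ψ - (φV : H)‖ ≤ 0 := by nlinarith [norm_nonneg (ψ - (φV : H)), hfin]
  have : ψ - (φV : H) = 0 := norm_eq_zero.1 (le_antisymm hle (norm_nonneg _))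
  exact sub_eq_zero.1 this
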